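/- Let A be an algebra over a field K (char K ≠ 2) obtained by the Cayley-Dickson process with trace form T_C. If s(A) ≤ n, then -1 is represented over K by the quadratic form n × T_C. -/

import Mathlib

/-- An algebra `A` of dimension `2 ^ t` over a field `K` obtained by the Cayley-Dickson
process: it has a basis `{1, f₂, …, f_q}`, `q = 2 ^ t` (indexed here by
`Option (Fin (2 ^ t - 1))`, with `none` corresponding to the unit `1`), such that
`fᵢ² = αᵢ • 1` for nonzero scalars `αᵢ` and `fᵢ fⱼ = -fⱼ fᵢ` for `i ≠ j`.  The
multiplication is not assumed associative, but is `K`-bilinear. -/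
structure CayleyDickson (K : Type) [Field K] (A : Type) [NonAssocRing A] [Module K A]
    (t : ℕ) : Type where
  smul_mul : ∀ (c : K) (x y : A), (c • x) * y = c • (x * y)
  mul_smul : ∀ (c : K) (x y : A), x * (c • y) = c • (x * y)
  b : Module.Basis (Option (Fin (2 ^ t - 1))) K A
  bOne : b none = 1
  α : Fin (2 ^ t - 1) → K
  α_ne_zero : ∀ i, α i ≠ 0
  sq : ∀ i, b (some i) * b (some i) = α i • (1 : A)
  anticomm : ∀ i j, i ≠ j → b (some i) * b (some j) = -(b (some j) * b (some i))

/-- If the level of the Cayley-Dickson algebra `A` satisfies `s(A) ≤ n`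
(i.e. `-1` is a sum of `n` squares in `A`), then `-1` is represented over `K` by the
quadratic form `n × T_C`, where `T_C = <1, α₂, …, α_q>` is the trace form. -/
lemma CayleyDickson.repr_mul_self (K A : Type) [Field K] [NonAssocRing A]
    [Module K A] (t : ℕ) (hchar : (2 : K) ≠ 0) (CD : CayleyDickson K A t) (x : A) :
    CD.b.repr (x * x) none =
      (CD.b.repr x none) ^ 2 + ∑ i, CD.α i * (CD.b.repr x (some i)) ^ 2 := by
  classical
  set c : Option (Fin (2 ^ t - 1)) → K := fun j => CD.b.repr x j with hc
  set g : Option (Fin (2 ^ t - 1)) → Option (Fin (2 ^ t - 1)) → K :=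
    fun j k => CD.b.repr (CD.b j * CD.b k) none with hg
  have hgskew : ∀ j k, j ≠ k → g j k = -g k j := by
    rintro (_|i) (_|j) hjk
    · exact absurd rfl hjk
    · simp only [hg, CD.bOne, one_mul, mul_one, Module.Basis.repr_self,
        Finsupp.single_apply]
      simp
    · simp only [hg, CD.bOne, one_mul, mul_one, Module.Basis.repr_self,
        Finsupp.single_apply]
      simp
    · have hij : i ≠ j := by rintro rfl; exact hjk rfl
      simp only [hg, CD.anticomm i j hij, map_neg, Finsupp.neg_apply]
  have hgnone : g none none = 1 := by
    have h1 : CD.b none * CD.b none = CD.b none := by rw [CD.bOne, one_mul]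
    show CD.b.repr (CD.b none * CD.b none) none = 1
    rw [h1, Module.Basis.repr_self, Finsupp.single_apply, if_pos rfl]
  have hgdiag : ∀ i, g (some i) (some i) = CD.α i := by
    intro i
    show CD.b.repr (CD.b (some i) * CD.b (some i)) none = CD.α i
    rw [CD.sq i, ← CD.bOne, map_smul, Finsupp.smul_apply, Module.Basis.repr_self,
      Finsupp.single_apply, if_pos rfl, smul_eq_mul, mul_one]
  have hxx : x * x = ∑ j, ∑ k, (c j * c k) • (CD.b j * CD.b k) := by
    conv_lhs => rw [← CD.b.sum_repr x]
    rw [Finset.sum_mul_sum]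
    refine Finset.sum_congr rfl fun j _ => Finset.sum_congr rfl fun k _ => ?_
    rw [CD.smul_mul, CD.mul_smul, smul_smul]
  have hrepr : CD.b.repr (x * x) none = ∑ j, ∑ k, c j * c k * g j k := by
    rw [hxx, map_sum, Finsupp.finset_sum_apply]
    refine Finset.sum_congr rfl fun j _ => ?_
    rw [map_sum, Finsupp.finset_sum_apply]
    refine Finset.sum_congr rfl fun k _ => ?_
    rw [map_smul, Finsupp.smul_apply, smul_eq_mul]
  have hswap : ∑ j, ∑ k, c j * c k * g j k = ∑ j, ∑ k, c k * c j * g k j :=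
    Finset.sum_comm
  have hdiag : ∀ j, ∑ k, (c j * c k * g j k + c k * c j * g k j)
      = 2 * (c j * c j * g j j) := by
    intro j
    rw [Finset.sum_eq_single j]
    · ring
    · intro k _ hkj
      rw [hgskew j k (Ne.symm hkj)]
      ring
    · intro habs; exact absurd (Finset.mem_univ j) habs
  have h2 : 2 * (∑ j, ∑ k, c j * c k * g j k) = 2 * ∑ j, c j * c j * g j j := by
    rw [two_mul]
    nth_rewrite 2 [hswap]
    rw [← Finset.sum_add_distrib]
    rw [Finset.mul_sum]
    refine Finset.sum_congr rfl fun j _ => ?_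
    rw [← Finset.sum_add_distrib, hdiag j]
  have hS : ∑ j, ∑ k, c j * c k * g j k = ∑ j, c j * c j * g j j :=
    mul_left_cancel₀ hchar h2
  rw [hrepr, hS, Fintype.sum_option, hgnone]
  congr 1
  · ring
  · refine Finset.sum_congr rfl fun i _ => ?_
    rw [hgdiag i]; ring

theorem neg_one_represented_by_trace_form (K A : Type) [Field K] [NonAssocRing A]
    [Module K A] (t : ℕ) (hchar : (2 : K) ≠ 0) (CD : CayleyDickson K A t) (n : ℕ)
    (hn : 0 < n) (h : ∃ f : Fin n → A, ∑ i, f i * f i = -1) :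
    ∃ v : Fin n → K × (Fin (2 ^ t - 1) → K),
      ∑ m, ((v m).1 ^ 2 + ∑ i, CD.α i * (v m).2 i ^ 2) = -1 := by
  obtain ⟨f, hf⟩ := h
  refine ⟨fun m => (CD.b.repr (f m) none, fun i => CD.b.repr (f m) (some i)), ?_⟩
  have : ∑ m, ((CD.b.repr (f m) none) ^ 2 + ∑ i, CD.α i * (CD.b.repr (f m) (some i)) ^ 2)
      = CD.b.repr (∑ m, f m * f m) none := by
    rw [map_sum, Finsupp.finset_sum_apply]
    exact Finset.sum_congr rfl fun m _ =>
      (CayleyDickson.repr_mul_self K A t hchar CD (f m)).symm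
  rw [this, hf]
  have h1 : CD.b.repr (1 : A) none = 1 := by
    rw [← CD.bOne, Module.Basis.repr_self]; simp
  rw [map_neg, Finsupp.neg_apply, h1]
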